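/- Let μ > -1/2, set b = √(1+2μ), and let γ > -(1+b). Then for every x ∈ (-1,1) the quantity (γ+1+b)·((1+x)/2)^{-b} - (γ+1) + b is nonzero, the function U(x) = (1-x)·(1 - b - 2b(γ+1-b)/((γ+1+b)·((1+x)/2)^{-b} - (γ+1) + b)) satisfies the reduced no-swirl equation with parameter μ on all of (-1,1), and lim_{x→-1⁺} U(x) = 2(1-b). -/

import Mathlib

open Set Filter Topology

set_option maxHeartbeats 1000000 in
theorem stmt4_alg (x t b γ : ℝ) (hxp : (1 + x) ≠ 0)
    (hD : ((γ + 1 + b) * t - (γ + 1) + b) ≠ 0) :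
    (1 - x ^ 2) * (-1 * (1 - b - 2 * b * (γ + 1 - b) / ((γ + 1 + b) * t - (γ + 1) + b))
        + (1 - x) * (-((0 * ((γ + 1 + b) * t - (γ + 1) + b)
            - 2 * b * (γ + 1 - b) * ((γ + 1 + b) * (-b * (t / ((1 + x) / 2)) * (1 / 2))))
          / ((γ + 1 + b) * t - (γ + 1) + b) ^ 2)))
    + 2 * x * ((1 - x) * (1 - b - 2 * b * (γ + 1 - b) / ((γ + 1 + b) * t - (γ + 1) + b)))
    + 1 / 2 * ((1 - x) * (1 - b - 2 * b * (γ + 1 - b) / ((γ + 1 + b) * t - (γ + 1) + b))) ^ 2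
    = (b ^ 2 - 1) / 2 * (1 - x) ^ 2 := by
  field_simp
  ring

/-- For μ > -1/2 and γ > -(1+b), the explicit solution is globally defined on (-1,1),
solves the reduced no-swirl equation there, and has limit 2(1-b) at x = -1⁺. -/
theorem stmt4 (μ b γ : ℝ) (hμ : -1 / 2 < μ)
    (hb : b = Real.sqrt (1 + 2 * μ)) (hγ : γ > -(1 + b))
    (U : ℝ → ℝ)
    (hU : U = fun x => (1 - x) *
      (1 - b - 2 * b * (γ + 1 - b) / ((γ + 1 + b) * ((1 + x) / 2) ^ (-b) - (γ + 1) + b))) :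
    (∀ x ∈ Ioo (-1 : ℝ) 1, (γ + 1 + b) * ((1 + x) / 2) ^ (-b) - (γ + 1) + b ≠ 0) ∧
    (∀ x ∈ Ioo (-1 : ℝ) 1,
      (1 - x ^ 2) * deriv U x + 2 * x * U x + (1 / 2) * (U x) ^ 2 = μ * (1 - x) ^ 2) ∧
    Tendsto U (𝓝[>] (-1)) (𝓝 (2 * (1 - b))) := by
  have hb0 : 0 < b := hb ▸ Real.sqrt_pos.mpr (by linarith)
  have hb2 : b ^ 2 = 1 + 2 * μ := by rw [hb, Real.sq_sqrt (by linarith)]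
  have hμ2 : μ = (b ^ 2 - 1) / 2 := by linarith
  have hA : 0 < γ + 1 + b := by linarith
  have key : ∀ x ∈ Ioo (-1 : ℝ) 1, 0 < (γ + 1 + b) * ((1 + x) / 2) ^ (-b) - (γ + 1) + b := by
    intro x hx
    have hs : 0 < (1 + x) / 2 := by have := hx.1; linarith
    have hs1 : (1 + x) / 2 < 1 := by have := hx.2; linarith
    have ht : 1 < ((1 + x) / 2) ^ (-b) :=
      (Real.one_lt_rpow_iff_of_pos hs).mpr (Or.inr ⟨hs1, by linarith⟩)
    nlinarith [mul_lt_mul_of_pos_left ht hA]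
  refine ⟨fun x hx => ne_of_gt (key x hx), ?_, ?_⟩
  · intro x hx
    have hs : 0 < (1 + x) / 2 := by have := hx.1; linarith
    have hxp : (1 + x) ≠ 0 := by have := hx.1; intro h; linarith
    have hD : (γ + 1 + b) * ((1 + x) / 2) ^ (-b) - (γ + 1) + b ≠ 0 := ne_of_gt (key x hx)
    have h1 : HasDerivAt (fun y : ℝ => (1 + y) / 2) (1 / 2) x := by
      simpa using ((hasDerivAt_id x).const_add 1).div_const 2
    have ht' : HasDerivAt (fun y : ℝ => ((1 + y) / 2) ^ (-b))
        (-b * ((1 + x) / 2) ^ (-b - 1) * (1 / 2)) x :=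
      by
        have h0 := Real.hasDerivAt_rpow_const (x := (1 + x) / 2) (p := -b) (Or.inl hs.ne')
        exact h0.comp x h1
    have hDder : HasDerivAt (fun y : ℝ => (γ + 1 + b) * ((1 + y) / 2) ^ (-b) - (γ + 1) + b)
        ((γ + 1 + b) * (-b * ((1 + x) / 2) ^ (-b - 1) * (1 / 2))) x :=
      ((ht'.const_mul _).sub_const _).add_const _
    have hV : HasDerivAt (fun y : ℝ => 1 - b - 2 * b * (γ + 1 - b) /
          ((γ + 1 + b) * ((1 + y) / 2) ^ (-b) - (γ + 1) + b))
        (-((0 * ((γ + 1 + b) * ((1 + x) / 2) ^ (-b) - (γ + 1) + b) -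
            2 * b * (γ + 1 - b) *
              ((γ + 1 + b) * (-b * ((1 + x) / 2) ^ (-b - 1) * (1 / 2)))) /
          ((γ + 1 + b) * ((1 + x) / 2) ^ (-b) - (γ + 1) + b) ^ 2)) x :=
      HasDerivAt.const_sub _ ((hasDerivAt_const x _).div hDder hD)
    have hUder : HasDerivAt U
        (-1 * (1 - b - 2 * b * (γ + 1 - b) /
            ((γ + 1 + b) * ((1 + x) / 2) ^ (-b) - (γ + 1) + b))
          + (1 - x) * (-((0 * ((γ + 1 + b) * ((1 + x) / 2) ^ (-b) - (γ + 1) + b) -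
            2 * b * (γ + 1 - b) *
              ((γ + 1 + b) * (-b * ((1 + x) / 2) ^ (-b - 1) * (1 / 2)))) /
          ((γ + 1 + b) * ((1 + x) / 2) ^ (-b) - (γ + 1) + b) ^ 2))) x := by
      rw [hU]
      exact (HasDerivAt.const_sub 1 (hasDerivAt_id x)).mul hV
    have hpow : ((1 + x) / 2) ^ (-b - 1) = ((1 + x) / 2) ^ (-b) / ((1 + x) / 2) := by
      rw [Real.rpow_sub hs, Real.rpow_one]
    rw [hUder.deriv, hpow, hU, hμ2]
    exact stmt4_alg x (((1 + x) / 2) ^ (-b)) b γ hxp hD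
  · have h1 : Tendsto (fun x : ℝ => (1 + x) / 2) (𝓝[>] (-1)) (𝓝[>] 0) := by
      apply tendsto_nhdsWithin_of_tendsto_nhds_of_eventually_within
      · have : Tendsto (fun x : ℝ => (1 + x) / 2) (𝓝 (-1)) (𝓝 ((1 + -1) / 2)) :=
          (continuous_const.add continuous_id).div_const 2 |>.tendsto _
        simpa using this.mono_left nhdsWithin_le_nhds
      · filter_upwards [self_mem_nhdsWithin] with y hy
        simp only [mem_Ioi] at hy ⊢; linarith
    have h2 : Tendsto (fun s : ℝ => s ^ (-b)) (𝓝[>] (0 : ℝ)) atTop := by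
      have h3 : Tendsto (fun s : ℝ => (s⁻¹) ^ b) (𝓝[>] (0 : ℝ)) atTop :=
        (tendsto_rpow_atTop hb0).comp tendsto_inv_nhdsGT_zero
      apply h3.congr'
      filter_upwards [self_mem_nhdsWithin] with s hs
      rw [Real.inv_rpow (le_of_lt hs), ← Real.rpow_neg (le_of_lt hs)]
    have hlim : Tendsto (fun x : ℝ => (γ + 1 + b) * ((1 + x) / 2) ^ (-b) - (γ + 1) + b)
        (𝓝[>] (-1 : ℝ)) atTop := by
      have h4 : Tendsto (fun x : ℝ => (γ + 1 + b) * ((1 + x) / 2) ^ (-b))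
          (𝓝[>] (-1 : ℝ)) atTop := (h2.comp h1).const_mul_atTop hA
      have h5 := tendsto_atTop_add_const_right _ (-(γ + 1)) h4
      have h6 := tendsto_atTop_add_const_right _ b h5
      simpa [sub_eq_add_neg] using h6
    have hfrac : Tendsto (fun x : ℝ => 2 * b * (γ + 1 - b) /
        ((γ + 1 + b) * ((1 + x) / 2) ^ (-b) - (γ + 1) + b)) (𝓝[>] (-1 : ℝ)) (𝓝 0) :=
      Tendsto.div_atTop tendsto_const_nhds hlim
    have hx : Tendsto (fun x : ℝ => 1 - x) (𝓝[>] (-1 : ℝ)) (𝓝 2) := by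
      have h : Tendsto (fun x : ℝ => 1 - x) (𝓝 (-1 : ℝ)) (𝓝 (1 - (-1))) :=
        (continuous_const.sub continuous_id).tendsto _
      have h' := h.mono_left (nhdsWithin_le_nhds (s := Ioi (-1 : ℝ)))
      norm_num at h'
      exact h'
    rw [hU]
    have := hx.mul ((tendsto_const_nhds (x := 1 - b)).sub hfrac)
    simpa using this
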